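/- Define the Lobachevsky function Λ(x) = -∫₀ˣ ln|2 sin t| dt for x ∈ ℝ. For each integer k ≥ 2, let z(k) = 1 + (1/2)·exp(iπ/k)·(1 + (1 + 4·exp(-iπ/k))^(1/2)), and let α₁(k) = arg z(k), α₂(k) = arg((z(k) - 1)/z(k)), α₃(k) = arg(1/(1 - z(k))). Then the volume V(k) = Λ(α₁(k)) + Λ(α₂(k)) + Λ(α₃(k)) tends to 0 as k → ∞. -/

import Mathlib

open Complex Real Filter

/-- The Lobachevsky function `Λ(x) = -∫₀ˣ ln|2 sin t| dt`. -/
noncomputable def lobachevsky (x : ℝ) : ℝ :=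
  -∫ t in (0 : ℝ)..x, Real.log |2 * Real.sin t|

section GiesAux

open MeasureTheory intervalIntegral

noncomputable def lsin (t : ℝ) : ℝ := Real.log |2 * Real.sin t|

lemma lsin_even (t : ℝ) : lsin (-t) = lsin t := by
  simp [lsin]

lemma lsin_pi_sub (t : ℝ) : lsin (Real.pi - t) = lsin t := by
  simp [lsin, Real.sin_pi_sub]

lemma lsin_periodic : Function.Periodic lsin Real.pi := by
  intro t; simp [lsin, Real.sin_add_pi]

-- integrability of log near 0
lemma integrableOn_log_Ioo : IntegrableOn Real.log (Set.Ioo (0:ℝ) 1) := by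
  have h := integrableOn_deriv_of_nonneg (g := fun x => x - x * Real.log x)
    (g' := fun x => -Real.log x) (a := (0:ℝ)) (b := 1)
    (by exact (continuous_id.sub Real.continuous_mul_log).continuousOn)
    (by
      intro x hx
      have h1 : HasDerivAt (fun x : ℝ => x * Real.log x) (Real.log x + 1) x := by
        simpa using (Real.hasDerivAt_mul_log hx.1.ne')
      have h3 := (hasDerivAt_id' x).sub h1
      show HasDerivAt (fun x : ℝ => x - x * Real.log x) (-Real.log x) x
      exact h3.congr_deriv (by ring))
    (by
      intro x hx
      have : Real.log x < 0 := Real.log_neg hx.1 hx.2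
      show 0 ≤ -Real.log x
      linarith)
  have h2 : IntegrableOn Real.log (Set.Ioc (0:ℝ) 1) :=
    h.neg.congr (Filter.Eventually.of_forall fun x => by simp)
  exact h2.mono_set Set.Ioo_subset_Ioc_self

lemma intervalIntegrable_log' (c : ℝ) (hc : 0 < c) :
    IntervalIntegrable Real.log volume 0 c := by
  have h1 : IntervalIntegrable Real.log volume 0 1 := by
    rw [intervalIntegrable_iff_integrableOn_Ioo_of_le zero_le_one]
    exact integrableOn_log_Ioo
  rcases le_total c 1 with h | h
  · exact h1.mono_set (by rw [Set.uIcc_of_le hc.le, Set.uIcc_of_le zero_le_one]; exact Set.Icc_subset_Icc le_rfl h)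
  · exact h1.trans (intervalIntegrable_log (Set.notMem_uIcc_of_lt zero_lt_one hc))

lemma lsin_measurable : Measurable lsin := by
  unfold lsin
  exact Real.measurable_log.comp ((_root_.continuous_abs.comp (by continuity)).measurable)

lemma lsin_bound {t : ℝ} (h0 : 0 < t) (h1 : t ≤ Real.pi / 2) :
    |lsin t| ≤ |Real.log t| + Real.log 2 := by
  have hs : Real.sin t ≤ 1 := Real.sin_le_one t
  have hj : 2 / Real.pi * t ≤ Real.sin t := Real.mul_le_sin h0.le h1
  have h4 : Real.pi ≤ 4 := Real.pi_le_four
  have hp := Real.pi_pos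
  have hpi : t / 2 ≤ 2 / Real.pi * t := by
    rw [div_mul_eq_mul_div, div_le_div_iff₀ two_pos hp]
    nlinarith
  have hsin_pos : 0 < Real.sin t := lt_of_lt_of_le (by positivity) hj
  have habs : |2 * Real.sin t| = 2 * Real.sin t := abs_of_pos (by linarith)
  have hup : lsin t ≤ Real.log 2 := by
    rw [lsin, habs]
    exact Real.log_le_log (by linarith) (by linarith)
  have hlow : Real.log t ≤ lsin t := by
    rw [lsin, habs]
    apply Real.log_le_log h0
    nlinarith
  have h2 : (0:ℝ) ≤ Real.log 2 := Real.log_nonneg (by norm_num)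
  have h3 : -|Real.log t| ≤ Real.log t := neg_abs_le _
  have h5 : Real.log t ≤ |Real.log t| := le_abs_self _
  rw [abs_le]
  constructor <;> linarith

lemma lsin_ii_half : IntervalIntegrable lsin volume 0 (Real.pi / 2) := by
  rw [intervalIntegrable_iff, Set.uIoc_of_le (by positivity : (0:ℝ) ≤ Real.pi / 2)]
  have hg : IntegrableOn (fun t => |Real.log t| + Real.log 2) (Set.Ioc 0 (Real.pi / 2)) := by
    have h1 : IntervalIntegrable (fun t => |Real.log t|) volume 0 (Real.pi / 2) :=
      (intervalIntegrable_log' _ (by positivity)).abs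
    have h2 := h1.add (_root_.intervalIntegrable_const (c := Real.log 2))
    rw [intervalIntegrable_iff, Set.uIoc_of_le (by positivity : (0:ℝ) ≤ Real.pi / 2)] at h2
    exact h2
  refine hg.mono' lsin_measurable.aestronglyMeasurable.restrict ?_
  filter_upwards [ae_restrict_mem measurableSet_Ioc] with t ht
  simpa [Real.norm_eq_abs] using lsin_bound ht.1 ht.2

lemma lsin_ii_half_pi : IntervalIntegrable lsin volume (Real.pi / 2) Real.pi := by
  have h := (lsin_ii_half.comp_sub_left Real.pi).symm
  have h2 := h.congr (fun x _ => lsin_pi_sub x)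
  rw [show Real.pi - Real.pi / 2 = Real.pi / 2 by ring, sub_zero] at h2
  exact h2

lemma lsin_ii_pi : IntervalIntegrable lsin volume 0 Real.pi :=
  lsin_ii_half.trans lsin_ii_half_pi

lemma lsin_ii (a b : ℝ) : IntervalIntegrable lsin volume a b := by
  have base0 : ∀ n : ℕ, IntervalIntegrable lsin volume 0 (n * Real.pi) := by
    intro n
    induction n with
    | zero => simp
    | succ m ih =>
      refine ih.trans ?_
      have h := lsin_ii_pi.comp_sub_right (m * Real.pi)
      have h2 := h.congr (fun x _ =>
        (lsin_periodic.sub_nat_mul_eq (n := m)))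
      rw [show (0:ℝ) + m * Real.pi = m * Real.pi by ring,
        show Real.pi + m * Real.pi = ((m:ℝ) + 1) * Real.pi by ring] at h2
      rw [show ((m + 1 : ℕ):ℝ) = (m:ℝ) + 1 by push_cast; ring]
      exact h2
  have bigall : ∀ n : ℕ, IntervalIntegrable lsin volume (-(n * Real.pi)) (n * Real.pi) := by
    intro n
    have h2 := (base0 n).comp_sub_left 0
    have h3 := h2.congr (fun x _ => by
      show lsin (0 - x) = lsin x
      rw [zero_sub]; exact lsin_even x)
    rw [sub_zero, zero_sub] at h3
    exact h3.symm.trans (base0 n)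
  obtain ⟨n, hn⟩ := exists_nat_gt ((max |a| |b|) / Real.pi)
  have hp := Real.pi_pos
  have hbound : max |a| |b| < n * Real.pi := by
    rw [div_lt_iff₀ hp] at hn; linarith
  have hnn : (0:ℝ) ≤ n * Real.pi := by positivity
  refine (bigall n).mono_set ?_
  rw [Set.uIcc_subset_uIcc_iff_mem, Set.uIcc_of_le (by linarith)]
  have haa : |a| < n * Real.pi := lt_of_le_of_lt (le_max_left _ _) hbound
  have hbb : |b| < n * Real.pi := lt_of_le_of_lt (le_max_right _ _) hbound
  rw [abs_lt] at haa hbb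
  exact ⟨⟨by linarith, by linarith⟩, by constructor <;> linarith⟩

lemma lob_eq (x : ℝ) : lobachevsky x = -∫ t in (0:ℝ)..x, lsin t := rfl

lemma lob_continuous : Continuous lobachevsky := by
  have h := intervalIntegral.continuous_primitive (fun a b => lsin_ii a b) 0
  exact h.neg

lemma lob_zero : lobachevsky 0 = 0 := by
  rw [lob_eq, intervalIntegral.integral_same, neg_zero]

lemma lob_neg (x : ℝ) : lobachevsky (-x) = -lobachevsky x := by
  have h := intervalIntegral.integral_comp_neg (a := 0) (b := x) (f := lsin)
  rw [neg_zero] at h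
  have h2 : ∫ t in (0:ℝ)..x, lsin (-t) = ∫ t in (0:ℝ)..x, lsin t :=
    intervalIntegral.integral_congr (fun t _ => lsin_even t)
  rw [h2] at h
  have key : ∫ t in (0:ℝ)..(-x), lsin t = -∫ t in (0:ℝ)..x, lsin t := by
    rw [intervalIntegral.integral_symm, ← h]
  rw [lob_eq, lob_eq, key, neg_neg]

lemma lob_pi : lobachevsky Real.pi = 0 := by
  set S := ∫ t in (0:ℝ)..(Real.pi/2), lsin t with hS
  have hcos : ∫ t in (0:ℝ)..(Real.pi/2), lsin (Real.pi/2 - t) = S := by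
    rw [intervalIntegral.integral_comp_sub_left lsin (Real.pi/2)]
    norm_num
    exact hS.symm
  have hIIcos : IntervalIntegrable (fun t => lsin (Real.pi/2 - t)) volume 0 (Real.pi/2) := by
    have h := (lsin_ii 0 (Real.pi/2)).comp_sub_left (Real.pi/2)
    rw [sub_zero] at h
    simpa using h.symm
  -- the doubling identity a.e.
  have hdup : ∫ t in (0:ℝ)..(Real.pi/2), lsin (2*t)
      = ∫ t in (0:ℝ)..(Real.pi/2), (lsin t + lsin (Real.pi/2 - t)) := by
    apply intervalIntegral.integral_congr_ae
    have hae : ∀ᵐ t : ℝ, t ≠ Real.pi/2 := by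
      rw [ae_iff]
      have : {t : ℝ | ¬ t ≠ Real.pi/2} = {Real.pi/2} := by
        ext t; simp
      rw [this]
      exact measure_singleton _
    filter_upwards [hae] with t ht htI
    rw [Set.uIoc_of_le (by positivity : (0:ℝ) ≤ Real.pi/2)] at htI
    have ht0 : 0 < t := htI.1
    have ht2 : t < Real.pi/2 := lt_of_le_of_ne htI.2 ht
    have hsin : 0 < Real.sin t := Real.sin_pos_of_pos_of_lt_pi ht0 (by linarith [Real.pi_pos])
    have hcos' : 0 < Real.cos t := Real.cos_pos_of_mem_Ioo ⟨by linarith [Real.pi_pos], ht2⟩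
    have h2s : Real.sin (2*t) = 2 * Real.sin t * Real.cos t := by
      rw [two_mul, Real.sin_add]; ring
    have hc : lsin (Real.pi/2 - t) = Real.log (2 * Real.cos t) := by
      rw [lsin, Real.sin_pi_div_two_sub, abs_of_pos (by linarith)]
    rw [lsin, lsin, h2s, hc, abs_of_pos (by nlinarith), abs_of_pos (by linarith),
      show 2 * (2 * Real.sin t * Real.cos t) = (2 * Real.sin t) * (2 * Real.cos t) by ring,
      Real.log_mul (by positivity) (by positivity)]
  have hadd : ∫ t in (0:ℝ)..(Real.pi/2), (lsin t + lsin (Real.pi/2 - t)) = S + S := by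
    rw [intervalIntegral.integral_add (lsin_ii 0 (Real.pi/2)) hIIcos, hcos]
  have hsmul := intervalIntegral.smul_integral_comp_mul_left lsin (a := 0) (b := Real.pi/2) 2
  rw [mul_zero, show (2:ℝ) * (Real.pi/2) = Real.pi by ring] at hsmul
  -- J = 2S
  have hsplit : ∫ t in (0:ℝ)..Real.pi, lsin t = S + S := by
    rw [← intervalIntegral.integral_add_adjacent_intervals lsin_ii_half lsin_ii_half_pi]
    congr 1
    have h := intervalIntegral.integral_comp_sub_left lsin Real.pi (a := 0) (b := Real.pi/2)
    rw [sub_zero, show Real.pi - Real.pi/2 = Real.pi/2 by ring] at h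
    rw [← h, hS]
    exact intervalIntegral.integral_congr (fun t _ => lsin_pi_sub t)
  rw [hdup, hadd] at hsmul
  rw [lob_eq]
  have : ∫ t in (0:ℝ)..Real.pi, lsin t = 0 := by
    rw [hsplit]
    have h4 := hsmul.trans hsplit
    simp only [smul_eq_mul] at h4
    linarith
  rw [this, neg_zero]

lemma tendsto_lob_arg_pos {w : ℕ → ℂ} {M : ℂ} (hM : 0 < M.re) (hMim : M.im = 0)
    (hw : Tendsto w atTop (nhds M)) :
    Tendsto (fun k => lobachevsky (Complex.arg (w k))) atTop (nhds 0) := by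
  have hslit : M ∈ Complex.slitPlane := Complex.mem_slitPlane_iff.2 (Or.inl hM)
  have harg : Tendsto (fun k => Complex.arg (w k)) atTop (nhds (Complex.arg M)) :=
    (Complex.continuousAt_arg hslit).tendsto.comp hw
  have hargM : Complex.arg M = 0 := Complex.arg_eq_zero_iff.2 ⟨hM.le, hMim⟩
  rw [hargM] at harg
  have := (lob_continuous.tendsto 0).comp harg
  simpa [lob_zero, Function.comp_def] using this

lemma abs_arg_eq {w : ℂ} (hw : w ≠ 0) :
    Real.arccos (w.re / ‖w‖) = |Complex.arg w| := by
  rw [← Complex.cos_arg hw, ← Real.cos_abs]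
  exact Real.arccos_cos (abs_nonneg _)
    (abs_le.2 ⟨(Complex.neg_pi_lt_arg w).le, Complex.arg_le_pi w⟩)

lemma tendsto_lob_arg_neg {w : ℕ → ℂ} {M : ℂ} (hM : M.re < 0) (hMim : M.im = 0)
    (hw : Tendsto w atTop (nhds M)) :
    Tendsto (fun k => lobachevsky (Complex.arg (w k))) atTop (nhds 0) := by
  have hM0 : M ≠ 0 := fun h => by rw [h] at hM; simp at hM
  have hev : ∀ᶠ k in atTop, w k ≠ 0 := hw.eventually_ne hM0
  set φ : ℕ → ℝ := fun k => Real.arccos ((w k).re / ‖w k‖) with hφdef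
  have hratio : Tendsto (fun k => (w k).re / ‖w k‖) atTop
      (nhds (M.re / ‖M‖)) := by
    exact ((Complex.continuous_re.tendsto M).comp hw).div
      ((continuous_norm.tendsto M).comp hw) (by simpa using hM0)
  have hMabs : ‖M‖ = -M.re := by
    have : M = ((M.re : ℝ) : ℂ) := Complex.ext rfl (by simp [hMim])
    rw [this, Complex.norm_real, Real.norm_eq_abs, abs_of_neg hM]
    simp
  have hratioM : M.re / ‖M‖ = -1 := by
    rw [hMabs, div_neg, div_self hM.ne]
  have hφ : Tendsto φ atTop (nhds Real.pi) := by
    rw [hφdef]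
    have := (Real.continuous_arccos.tendsto _).comp hratio
    rwa [Function.comp_def, hratioM, Real.arccos_neg_one] at this
  have hlobφ : Tendsto (fun k => lobachevsky (φ k)) atTop (nhds 0) := by
    have := (lob_continuous.tendsto Real.pi).comp hφ
    simpa [lob_pi, Function.comp_def] using this
  rw [tendsto_zero_iff_norm_tendsto_zero]
  have heq : ∀ᶠ k in atTop,
      |lobachevsky (φ k)| = ‖lobachevsky (Complex.arg (w k))‖ := by
    filter_upwards [hev] with k hk
    have h1 : φ k = |Complex.arg (w k)| := abs_arg_eq hk
    rw [Real.norm_eq_abs, h1]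
    rcases le_or_gt 0 (Complex.arg (w k)) with h | h
    · rw [_root_.abs_of_nonneg h]
    · rw [_root_.abs_of_neg h, lob_neg, abs_neg]
  exact Tendsto.congr' heq (by simpa using hlobφ.abs)


/-- Theorem 5.1 (volume claim): the volumes
`V(k) = Λ(α₁(k)) + Λ(α₂(k)) + Λ(α₃(k))` of the Gies.1 simplices (root series
(2.10)) tend to `0` as `k → ∞`. -/
theorem gies1_volume_tendsto_zero (z : ℕ → ℂ)
    (hz : ∀ k : ℕ, 2 ≤ k →
      z k = 1 + (1 / 2) * Complex.exp (Real.pi * Complex.I / (k : ℂ)) *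
        (1 + (1 + 4 * Complex.exp (-(Real.pi * Complex.I) / (k : ℂ))) ^ ((1 : ℂ) / 2))) :
    Tendsto (fun k : ℕ =>
        lobachevsky (Complex.arg (z k)) +
        lobachevsky (Complex.arg ((z k - 1) / z k)) +
        lobachevsky (Complex.arg (1 / (1 - z k))))
      atTop (nhds 0) := by
  set s : ℝ := Real.sqrt 5 with hs
  have hs2 : s ^ 2 = 5 := Real.sq_sqrt (by norm_num)
  have hs_pos : 0 < s := Real.sqrt_pos.2 (by norm_num)
  have hs_lt : 2 < s ∧ s < 3 := by
    constructor <;> nlinarith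
  set r : ℝ := (3 + s) / 2 with hr
  -- limit of z
  have hinv : Tendsto (fun k : ℕ => ((k : ℂ))⁻¹) atTop (nhds 0) := by
    have h1 : Tendsto (fun k : ℕ => ((k : ℝ))⁻¹) atTop (nhds 0) :=
      tendsto_inv_atTop_zero.comp tendsto_natCast_atTop_atTop
    have h2 := (Complex.continuous_ofReal.tendsto 0).comp h1
    simpa [Function.comp_def] using h2
  have hdiv : ∀ c : ℂ, Tendsto (fun k : ℕ => c / (k : ℂ)) atTop (nhds 0) := by
    intro c
    have := hinv.const_mul c
    simpa [div_eq_mul_inv] using this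
  have hE : Tendsto (fun k : ℕ => Complex.exp (Real.pi * Complex.I / (k : ℂ))) atTop (nhds 1) := by
    have := (Complex.continuous_exp.tendsto 0).comp (hdiv (Real.pi * Complex.I))
    simpa [Function.comp_def] using this
  have hE' : Tendsto (fun k : ℕ => Complex.exp (-(Real.pi * Complex.I) / (k : ℂ))) atTop
      (nhds 1) := by
    have := (Complex.continuous_exp.tendsto 0).comp (hdiv (-(Real.pi * Complex.I)))
    simpa [Function.comp_def] using this
  have hbase : Tendsto (fun k : ℕ => 1 + 4 * Complex.exp (-(Real.pi * Complex.I) / (k : ℂ)))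
      atTop (nhds 5) := by
    have := (hE'.const_mul 4).const_add 1
    norm_num at this
    exact this
  have hcpow : ContinuousAt (fun w : ℂ => w ^ ((1 : ℂ) / 2)) 5 :=
    _root_.continuousAt_cpow_const (Complex.mem_slitPlane_iff.2 (Or.inl (by norm_num)))
  have h5 : (5 : ℂ) ^ ((1 : ℂ) / 2) = (s : ℂ) := by
    have h1 : ((5 : ℝ) : ℂ) ^ (((1 / 2 : ℝ)) : ℂ) = (((5 : ℝ) ^ ((1 / 2 : ℝ)) : ℝ) : ℂ) :=
      (Complex.ofReal_cpow (by norm_num) _).symm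
    have h2 : (5 : ℝ) ^ ((1 / 2 : ℝ)) = s := by
      rw [hs, Real.sqrt_eq_rpow]
    rw [← h2]
    rw [← h1]
    norm_num
  have hsqrt : Tendsto
      (fun k : ℕ => (1 + 4 * Complex.exp (-(Real.pi * Complex.I) / (k : ℂ))) ^ ((1 : ℂ) / 2))
      atTop (nhds ((s : ℂ))) := by
    have := hcpow.tendsto.comp hbase
    rwa [h5] at this
  have hL : Tendsto (fun k : ℕ => 1 + (1 / 2) * Complex.exp (Real.pi * Complex.I / (k : ℂ)) *
      (1 + (1 + 4 * Complex.exp (-(Real.pi * Complex.I) / (k : ℂ))) ^ ((1 : ℂ) / 2)))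
      atTop (nhds ((r : ℝ) : ℂ)) := by
    have := (((hE.const_mul (1/2 : ℂ)).mul (hsqrt.const_add 1)).const_add 1)
    have heq : (1 : ℂ) + 1 / 2 * 1 * (1 + (s : ℂ)) = ((r : ℝ) : ℂ) := by
      rw [hr]; push_cast; ring
    rwa [heq] at this
  have hzt : Tendsto z atTop (nhds ((r : ℝ) : ℂ)) := by
    refine hL.congr' ?_
    filter_upwards [eventually_ge_atTop 2] with k hk
    exact (hz k hk).symm
  have hr_pos : (1:ℝ) < r := by rw [hr]; nlinarith [hs_lt.1]
  -- term 1
  have T1 : Tendsto (fun k => lobachevsky (Complex.arg (z k))) atTop (nhds 0) :=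
    tendsto_lob_arg_pos (by simp; linarith) (by simp) hzt
  -- term 2
  have hrne : ((r : ℝ) : ℂ) ≠ 0 := by
    simp only [ne_eq, Complex.ofReal_eq_zero]
    linarith
  have T2 : Tendsto (fun k => lobachevsky (Complex.arg ((z k - 1) / z k))) atTop (nhds 0) := by
    have hlim : Tendsto (fun k => (z k - 1) / z k) atTop
        (nhds ((((r - 1) / r : ℝ)) : ℂ)) := by
      have := (hzt.sub (tendsto_const_nhds (x := (1:ℂ)))).div hzt hrne
      have heq : (((r : ℝ) : ℂ) - 1) / ((r : ℝ) : ℂ) = (((r - 1) / r : ℝ) : ℂ) := by push_cast; ring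
      rwa [heq] at this
    exact tendsto_lob_arg_pos (by simp only [Complex.ofReal_re]; exact div_pos (by linarith) (by linarith)) (by simp) hlim
  -- term 3
  have T3 : Tendsto (fun k => lobachevsky (Complex.arg (1 / (1 - z k)))) atTop (nhds 0) := by
    have h1r : (1 : ℂ) - ((r : ℝ) : ℂ) ≠ 0 := by
      simp only [ne_eq, sub_eq_zero]
      intro h
      have := congrArg Complex.re h
      simp at this
      linarith
    have hlim : Tendsto (fun k => 1 / (1 - z k)) atTop
        (nhds (((1 / (1 - r) : ℝ)) : ℂ)) := by
      have := (tendsto_const_nhds (x := (1:ℂ))).div ((tendsto_const_nhds (x := (1:ℂ))).sub hzt) h1r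
      have heq : (1 : ℂ) / (1 - ((r : ℝ) : ℂ)) = ((1 / (1 - r) : ℝ) : ℂ) := by push_cast; ring
      rwa [heq] at this
    refine tendsto_lob_arg_neg ?_ (by simp) hlim
    simp only [Complex.ofReal_re]
    apply div_neg_of_pos_of_neg one_pos
    linarith
  have := (T1.add T2).add T3
  simpa using this

end GiesAux
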